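/- For any y, z ∈ ℝⁿ with ‖z‖ ≤ ‖y‖, there exists a symmetric n×n matrix W with −I ≤ W ≤ I (in the Loewner order) such that z = W y. -/

import Mathlib

open Matrix

lemma myVecMulVec_mulVec {n : ℕ} (u x : Fin n → ℝ) :
    Matrix.vecMulVec u u *ᵥ x = (u ⬝ᵥ x) • u := by
  funext i
  simp [Matrix.vecMulVec_apply, Matrix.mulVec, dotProduct, Finset.mul_sum,
    mul_comm, mul_assoc, mul_left_comm]

lemma myCS {n : ℕ} (u x : Fin n → ℝ) : (u ⬝ᵥ x) ^ 2 ≤ (u ⬝ᵥ u) * (x ⬝ᵥ x) := by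
  simpa [dotProduct, sq] using
    Finset.sum_mul_sq_le_sq_mul_sq Finset.univ u x

lemma key {n : ℕ} (y z : Fin n → ℝ) (r s : ℝ)
    (hr : r ^ 2 = y ⬝ᵥ y) (hs : s ^ 2 = z ⬝ᵥ z) (hs0 : 0 ≤ s) (hr0 : 0 ≤ r) (hsr : s ≤ r) :
    ∃ W : Matrix (Fin n) (Fin n) ℝ, W.IsSymm ∧
      (W - (-1)).PosSemidef ∧ ((1 : Matrix (Fin n) (Fin n) ℝ) - W).PosSemidef ∧
      z = W *ᵥ y := by
  classical
  set c : ℝ := s / r with hc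
  set u : Fin n → ℝ := s • y - r • z with hu
  set t : ℝ := u ⬝ᵥ u with htdef
  have hzy : z ⬝ᵥ y = y ⬝ᵥ z := dotProduct_comm _ _
  have hkey : t = 2 * s * (u ⬝ᵥ y) := by
    simp only [htdef, hu, sub_dotProduct, dotProduct_sub, smul_dotProduct,
      dotProduct_smul, smul_eq_mul]
    linear_combination s ^ 2 * hr - r ^ 2 * hs + s * r * hzy
  have dself : ∀ v : Fin n → ℝ, 0 ≤ v ⬝ᵥ v := fun v =>
    Finset.sum_nonneg fun i _ => mul_self_nonneg _
  have ht0 : 0 ≤ t := dself u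
  have hc0 : 0 ≤ c := div_nonneg hs0 hr0
  have hc1 : c ≤ 1 := div_le_one_of_le₀ hsr hr0
  refine ⟨c • ((1 : Matrix (Fin n) (Fin n) ℝ) - (2 * t⁻¹) • vecMulVec u u), ?_, ?_, ?_, ?_⟩
  · -- symmetry
    unfold Matrix.IsSymm
    rw [transpose_smul, transpose_sub, transpose_smul, transpose_one]
    congr 2
    ext i j
    simp [vecMulVec_apply, mul_comm]
  all_goals {
    have hQ : ∀ x : Fin n → ℝ,
        x ⬝ᵥ ((c • ((1 : Matrix (Fin n) (Fin n) ℝ) - (2 * t⁻¹) • vecMulVec u u)) *ᵥ x)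
          = c * (x ⬝ᵥ x) - 2 * c * t⁻¹ * (u ⬝ᵥ x) ^ 2 := by
      intro x
      rw [smul_mulVec, sub_mulVec, one_mulVec, smul_mulVec, myVecMulVec_mulVec]
      have hxu : x ⬝ᵥ u = u ⬝ᵥ x := dotProduct_comm _ _
      simp only [dotProduct_smul, dotProduct_sub, smul_eq_mul, hxu]
      ring
    have hE : ∀ x : Fin n → ℝ, t⁻¹ * (u ⬝ᵥ x) ^ 2 ≤ x ⬝ᵥ x ∧ 0 ≤ t⁻¹ * (u ⬝ᵥ x) ^ 2 ∧ 0 ≤ x ⬝ᵥ x := by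
      intro x
      have hCS := myCS u x
      have hxx : 0 ≤ x ⬝ᵥ x := dself x
      refine ⟨?_, mul_nonneg (inv_nonneg.2 ht0) (sq_nonneg _), hxx⟩
      rcases eq_or_lt_of_le ht0 with h | h
      · have : (u ⬝ᵥ x) ^ 2 = 0 := le_antisymm (by nlinarith) (sq_nonneg _)
        rw [this, mul_zero]
        exact hxx
      · rw [inv_mul_le_iff₀ h]
        exact hCS.trans (by nlinarith)
    first
    | { -- W - (-1) PosSemidef
        rw [posSemidef_iff_dotProduct_mulVec]
        constructor
        · rw [Matrix.IsHermitian, conjTranspose_eq_transpose_of_trivial]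
          rw [transpose_sub, transpose_neg, transpose_one, transpose_smul, transpose_sub,
            transpose_smul, transpose_one]
          congr 3
          ext i j
          simp [vecMulVec_apply, mul_comm]
        · intro x
          have hx := hE x
          rw [star_trivial, sub_mulVec, dotProduct_sub, hQ, neg_mulVec, one_mulVec,
            dotProduct_neg]
          nlinarith [hx.1, hx.2.1, hx.2.2] }
    | { -- 1 - W PosSemidef
        rw [posSemidef_iff_dotProduct_mulVec]
        constructor
        · rw [Matrix.IsHermitian, conjTranspose_eq_transpose_of_trivial]
          rw [transpose_sub, transpose_one, transpose_smul, transpose_sub,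
            transpose_smul, transpose_one]
          congr 3
          ext i j
          simp [vecMulVec_apply, mul_comm]
        · intro x
          have hx := hE x
          rw [star_trivial, sub_mulVec, dotProduct_sub, hQ, one_mulVec]
          nlinarith [hx.1, hx.2.1, hx.2.2] }
    | { -- z = W *ᵥ y
        by_cases hu0 : u = 0
        · have hsy : s • y = r • z := by
            have := hu0; rw [hu] at this; exact sub_eq_zero.mp this
          rw [hu0]
          by_cases hr' : r = 0
          · have hs' : s = 0 := le_antisymm (hr' ▸ hsr) hs0
            have hz : z = 0 := by
              have : z ⬝ᵥ z = 0 := by rw [← hs, hs', zero_pow]; norm_num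
              exact dotProduct_self_eq_zero.mp this
            simp [hz, hc, hs', hr']
          · funext i
            have := congr_fun hsy i
            simp only [Pi.smul_apply, smul_eq_mul] at this
            rw [smul_mulVec, sub_mulVec, one_mulVec, smul_mulVec,
              myVecMulVec_mulVec]
            simp only [zero_dotProduct, zero_smul, smul_zero, Pi.smul_apply, Pi.sub_apply,
              sub_zero, smul_eq_mul]
            rw [hc]
            field_simp
            linarith [this]
        · have htpos : 0 < t := lt_of_le_of_ne ht0 (by
            intro h
            exact hu0 (dotProduct_self_eq_zero.mp h.symm))
          have hspos : 0 < s := by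
            rcases lt_or_eq_of_le hs0 with h | h
            · exact h
            · exfalso; rw [← h] at hkey; simp at hkey; linarith
          have hrpos : 0 < r := lt_of_lt_of_le hspos hsr
          have huy : u ⬝ᵥ y = t / (2 * s) := by
            field_simp
            linarith [hkey]
          funext i
          rw [smul_mulVec, sub_mulVec, one_mulVec, smul_mulVec,
            myVecMulVec_mulVec, huy]
          simp only [Pi.smul_apply, Pi.sub_apply, smul_eq_mul, hu, hc]
          field_simp
          ring }
  }

theorem stmt2 (n : ℕ) (y z : EuclideanSpace ℝ (Fin n)) (h : ‖z‖ ≤ ‖y‖) :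
    ∃ W : Matrix (Fin n) (Fin n) ℝ, W.IsSymm ∧
      (W - (-1)).PosSemidef ∧ ((1 : Matrix (Fin n) (Fin n) ℝ) - W).PosSemidef ∧
      (z : Fin n → ℝ) = W *ᵥ (y : Fin n → ℝ) := by
  have hy : ‖y‖ ^ 2 = (y : Fin n → ℝ) ⬝ᵥ (y : Fin n → ℝ) := by
    rw [← real_inner_self_eq_norm_sq]
    simp [PiLp.inner_apply, dotProduct, RCLike.inner_apply]
    rw [EuclideanSpace.norm_eq, Real.sq_sqrt (Finset.sum_nonneg fun i _ => sq_nonneg _)]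
    simp [Real.norm_eq_abs, sq_abs, sq]
  have hz : ‖z‖ ^ 2 = (z : Fin n → ℝ) ⬝ᵥ (z : Fin n → ℝ) := by
    rw [← real_inner_self_eq_norm_sq]
    simp [PiLp.inner_apply, dotProduct, RCLike.inner_apply]
    rw [EuclideanSpace.norm_eq, Real.sq_sqrt (Finset.sum_nonneg fun i _ => sq_nonneg _)]
    simp [Real.norm_eq_abs, sq_abs, sq]
  exact key _ _ ‖y‖ ‖z‖ hy hz (norm_nonneg _) (norm_nonneg _) h
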